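/- Let 𝒢 be the Sprague–Grundy function of i-MARK({1},{2,3}). For every n ∈ ℕ there exists k with 0 ≤ k ≤ 4 such that 𝒢(3·(n+k)) ≠ 0. In other words, there cannot be five consecutive positions divisible by 3 all having Grundy value 0. -/
import Mathlib


/-- The minimum excludant of a set of naturals. -/
noncomputable def mex (T : Set ℕ) : ℕ := sInf {k : ℕ | k ∉ T}

/-- The set of followers of position `n` in the game i-MARK(S,D):
`n - s` for `s ∈ S` with `0 < s ≤ n`, and `n / d` for `d ∈ D` with `2 ≤ d`, `0 < n`, `d ∣ n`. -/
def followers (S D : Finset ℕ) (n : ℕ) : Finset ℕ :=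
  ((S.filter fun s => 0 < s ∧ s ≤ n).image fun s => n - s) ∪
  ((D.filter fun d => 2 ≤ d ∧ 0 < n ∧ d ∣ n).image fun d => n / d)

theorem followers_lt {S D : Finset ℕ} {n m : ℕ} (h : m ∈ followers S D n) : m < n := by
  simp only [followers, Finset.mem_union, Finset.mem_image, Finset.mem_filter] at h
  rcases h with ⟨s, ⟨-, hs, hsn⟩, rfl⟩ | ⟨d, ⟨-, hd, hn, -⟩, rfl⟩
  · omega
  · exact Nat.div_lt_self hn (by omega)

/-- The Sprague–Grundy function of i-MARK(S,D). -/
noncomputable def grundy (S D : Finset ℕ) : ℕ → ℕ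
  | n => mex ↑((followers S D n).attach.image fun m => grundy S D m.1)
decreasing_by exact followers_lt m.2

/-- The number of followers of position `n` in i-MARK(S,D) (for positive `S` and `D` with
elements `≥ 2`): `φ(0) = 0` and `φ(n) = #{s ∈ S : s ≤ n} + #{d ∈ D : d ∣ n}` for `n > 0`. -/
def numFollowers (S D : Finset ℕ) (n : ℕ) : ℕ :=
  if n = 0 then 0 else (S.filter fun s => s ≤ n).card + (D.filter fun d => d ∣ n).card

/-- `σ : ℕ → ℕ` is a guess seed for starting position `n` in i-MARK(S,D) if
`σ i ≤ φ(i)` for all `n ≤ i < n + max S` (values of `σ` outside this window are irrelevant). -/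
def IsGuessSeed (S D : Finset ℕ) (n : ℕ) (σ : ℕ → ℕ) : Prop :=
  ∀ i, n ≤ i → i < n + S.sup id → σ i ≤ numFollowers S D i

/-- The guess sequence generated by seed `σ` from starting position `n`: it equals `σ` on
`[n, n + max S)`, and from `n + max S` on it is computed by the mex rule, using guessed values
for subtraction followers and true Grundy values for division followers. -/
noncomputable def guessSeq (S D : Finset ℕ) (n : ℕ) (σ : ℕ → ℕ) : ℕ → ℕ
  | m =>
    if m < n + S.sup id then σ m
    else
      mex ((↑((S.filter fun t => 0 < t ∧ t ≤ m).attach.image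
              fun t => guessSeq S D n σ (m - t.1)) : Set ℕ) ∪
        {g | ∃ d ∈ D, 2 ≤ d ∧ 0 < m ∧ d ∣ m ∧ g = grundy S D (m / d)})
decreasing_by
  have ht := t.2
  simp only [Finset.mem_filter] at ht
  omega

/-- Convergence occurs in `c` steps at starting position `n`: any two guess sequences from `n`
agree on all positions `m` with `n + c ≤ m < n + c + max S`. -/
def ConvergesIn (S D : Finset ℕ) (n c : ℕ) : Prop :=
  ∀ σ σ' : ℕ → ℕ, IsGuessSeed S D n σ → IsGuessSeed S D n σ' →
    ∀ m, n + c ≤ m → m < n + c + S.sup id → guessSeq S D n σ m = guessSeq S D n σ' m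

lemma mex_coe_eq_zero_iff (F : Finset ℕ) : mex ↑F = 0 ↔ 0 ∉ F := by
  unfold mex
  have hne : {k : ℕ | k ∉ (F : Set ℕ)}.Nonempty :=
    (F.finite_toSet.infinite_compl).nonempty
  constructor
  · intro h
    have := Nat.sInf_mem hne
    rw [h] at this
    simpa using this
  · intro h
    exact Nat.sInf_eq_zero.mpr (Or.inl (by simpa using h))

lemma grundy_eq_zero_iff (S D : Finset ℕ) (n : ℕ) :
    grundy S D n = 0 ↔ ∀ m ∈ followers S D n, grundy S D m ≠ 0 := by
  rw [grundy, mex_coe_eq_zero_iff]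
  simp only [Finset.mem_image, Finset.mem_attach, true_and, Subtype.exists, not_exists]

lemma mem_followers_iff (n m : ℕ) :
    m ∈ followers {1} {2, 3} n ↔
      (1 ≤ n ∧ m = n - 1) ∨ (0 < n ∧ 2 ∣ n ∧ m = n / 2) ∨ (0 < n ∧ 3 ∣ n ∧ m = n / 3) := by
  simp only [followers, Finset.mem_union, Finset.mem_image, Finset.mem_filter,
    Finset.mem_singleton, Finset.mem_insert]
  constructor
  · rintro (⟨s, ⟨rfl, -, hs⟩, rfl⟩ | ⟨d, ⟨hd, -, hn, hdvd⟩, rfl⟩)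
    · exact Or.inl ⟨hs, rfl⟩
    · rcases hd with rfl | rfl
      · exact Or.inr (Or.inl ⟨hn, hdvd, rfl⟩)
      · exact Or.inr (Or.inr ⟨hn, hdvd, rfl⟩)
  · rintro (⟨h1, rfl⟩ | ⟨h1, h2, rfl⟩ | ⟨h1, h2, rfl⟩)
    · exact Or.inl ⟨1, ⟨rfl, by omega⟩, rfl⟩
    · exact Or.inr ⟨2, ⟨Or.inl rfl, by omega, h1, h2⟩, rfl⟩
    · exact Or.inr ⟨3, ⟨Or.inr rfl, by omega, h1, h2⟩, rfl⟩

lemma G0 : grundy {1} {2, 3} 0 = 0 := by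
  rw [grundy_eq_zero_iff]
  intro m hm
  rw [mem_followers_iff] at hm
  omega

lemma G1 : grundy {1} {2, 3} 1 ≠ 0 := by
  intro h0
  rw [grundy_eq_zero_iff] at h0
  have h := h0
  exact h 0 ((mem_followers_iff 1 0).mpr (Or.inl ⟨le_refl 1, rfl⟩)) G0

lemma G2 : grundy {1} {2, 3} 2 = 0 := by
  rw [grundy_eq_zero_iff]
  intro m hm
  rw [mem_followers_iff] at hm
  have : m = 1 := by omega
  subst this
  exact G1

lemma G3 : grundy {1} {2, 3} 3 ≠ 0 := by
  intro h0
  rw [grundy_eq_zero_iff] at h0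
  have h := h0
  exact h 2 ((mem_followers_iff 3 2).mpr (Or.inl ⟨by omega, rfl⟩)) G2

lemma div3 (j : ℕ) (hj : 0 < j) (h : grundy {1} {2, 3} (3 * j) = 0) :
    grundy {1} {2, 3} j ≠ 0 := by
  rw [grundy_eq_zero_iff] at h
  have hmem : j ∈ followers {1} {2, 3} (3 * j) :=
    (mem_followers_iff _ _).mpr (Or.inr (Or.inr ⟨by omega, ⟨j, rfl⟩, by omega⟩))
  exact h j hmem

lemma key (m : ℕ) (h1 : 1 ≤ m) (h2 : ¬ 2 ∣ m) (h3 : ¬ 3 ∣ m)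
    (hprev : grundy {1} {2, 3} (m - 1) ≠ 0) : grundy {1} {2, 3} m = 0 := by
  rw [grundy_eq_zero_iff]
  intro f hf
  rw [mem_followers_iff] at hf
  rcases hf with ⟨-, rfl⟩ | ⟨-, hd, -⟩ | ⟨-, hd, -⟩
  · exact hprev
  · exact absurd hd h2
  · exact absurd hd h3

/-- In i-MARK({1},{2,3}), there cannot be five consecutive positions divisible by 3
all having Grundy value 0. -/
theorem imark_no_five_consecutive_zero_multiples_of_three (n : ℕ) :
    ∃ k : ℕ, k ≤ 4 ∧ grundy {1} {2, 3} (3 * (n + k)) ≠ 0 := by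
  by_contra hc
  push_neg at hc
  rcases Nat.eq_zero_or_pos n with rfl | hn
  · exact G3 (by simpa using hc 1 (by norm_num))
  · have hk : ∀ k ≤ 4, grundy {1} {2, 3} (n + k) ≠ 0 := fun k hk4 =>
      div3 (n + k) (by omega) (hc k hk4)
    obtain ⟨k, hk1, hk4, h2d, h3d⟩ :
        ∃ k, 1 ≤ k ∧ k ≤ 4 ∧ ¬ 2 ∣ (n + k) ∧ ¬ 3 ∣ (n + k) := by
      obtain ⟨r, hr, hrn⟩ : ∃ r, r < 6 ∧ n % 6 = r := ⟨n % 6, Nat.mod_lt _ (by norm_num), rfl⟩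
      interval_cases r
      · exact ⟨1, by omega, by omega, by omega, by omega⟩
      · exact ⟨4, by omega, by omega, by omega, by omega⟩
      · exact ⟨3, by omega, by omega, by omega, by omega⟩
      · exact ⟨2, by omega, by omega, by omega, by omega⟩
      · exact ⟨1, by omega, by omega, by omega, by omega⟩
      · exact ⟨2, by omega, by omega, by omega, by omega⟩
    have hzero : grundy {1} {2, 3} (n + k) = 0 := by
      apply key (n + k) (by omega) h2d h3d
      have := hk (k - 1) (by omega)
      have he : n + (k - 1) = n + k - 1 := by omega
      rwa [he] at this
    exact hk k (by omega) hzero
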